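/- arXiv:2201.08899 — 3 statements merged into one kernel-verified Lean document; each statement's English description precedes it below -/
import Mathlib

section
/- Let V be a finite set, ∅ ≠ V_1 ⊊ V, and m = #(V ∖ V_1) + 1. Let v = (v_0, …, v_k) be a self-avoiding finite path with all entries in V ∖ V_1, and let V_1 = W_1 ⊊ W_2 ⊊ ⋯ ⊊ W_m = V be subsets such that #(W_{j+1} ∖ W_j) = 1 for every 1 ≤ j ≤ m−1 and W_{j+2} ∖ W_{j+1} = {v_j} for every 0 ≤ j ≤ k (indices so that W_2 = W_1 ∪ {v_0}, …, W_{k+2} = W_{k+1} ∪ {v_k}). Then for every finite path w on V satisfying 𝔏_{V_1}(w) = w and (𝔏(w))^{[V ∖ V_1]} = v, one has 𝔏(w) = 𝔏_{W_m} ∘ ⋯ ∘ 𝔏_{W_3} ∘ 𝔏_{W_2}(w). -/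
open MeasureTheory

namespace LERW

variable {V : Type*} [DecidableEq V]

/-- The suffix of `l` strictly after the last occurrence of `a` in `l`
(`l` itself if `a` does not occur in `l`). -/
def dropToLastOcc (a : V) (l : List V) : List V :=
  (l.reverse.takeWhile (fun z => z ≠ a)).reverse

lemma dropToLastOcc_length_le (a : V) (l : List V) :
    (dropToLastOcc a l).length ≤ l.length := by
  unfold dropToLastOcc
  calc ((l.reverse.takeWhile (fun z => z ≠ a)).reverse).length
      = (l.reverse.takeWhile (fun z => z ≠ a)).length := by simp
    _ ≤ l.reverse.length := (List.takeWhile_sublist _).length_le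
    _ = l.length := by simp

/-- Partial loop erasure `𝔏_S` of a finite path, associated with a set `S` of vertices. -/
def PLE (S : Finset V) : List V → List V
  | [] => []
  | a :: rest =>
    if a ∈ S then
      if a = (a :: rest).getLast (List.cons_ne_nil a rest) then [a]
      else a :: PLE S (dropToLastOcc a rest)
    else
      if rest = [] then [a]
      else a :: PLE S rest
termination_by l => l.length
decreasing_by
  · simpa using Nat.lt_succ_of_le (dropToLastOcc_length_le a rest)
  · simp

lemma PLE_nil (S : Finset V) : PLE S ([] : List V) = [] := by rw [PLE]

lemma PLE_cons (S : Finset V) (a : V) (rest : List V) :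
    PLE S (a :: rest) =
      if a ∈ S then
        if a = (a :: rest).getLast (List.cons_ne_nil a rest) then [a]
        else a :: PLE S (dropToLastOcc a rest)
      else
        if rest = [] then [a]
        else a :: PLE S rest := by rw [PLE]

lemma dropToLastOcc_suffix (a : V) (l : List V) : dropToLastOcc a l <:+ l := by
  have h := List.takeWhile_prefix (l := l.reverse) (fun z => z ≠ a)
  simpa [dropToLastOcc] using List.reverse_suffix.mpr h

lemma dropToLastOcc_sublist (a : V) (l : List V) :
    List.Sublist (dropToLastOcc a l) l :=
  (dropToLastOcc_suffix a l).sublist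

lemma not_mem_dropToLastOcc (a : V) (l : List V) : a ∉ dropToLastOcc a l := by
  intro h
  have : a ∈ l.reverse.takeWhile (fun z => z ≠ a) := by
    simpa [dropToLastOcc] using h
  have := List.mem_takeWhile_imp this
  simp at this

lemma dropToLastOcc_of_not_mem {a : V} {l : List V} (h : a ∉ l) :
    dropToLastOcc a l = l := by
  have h2 : l.reverse.takeWhile (fun z => z ≠ a) = l.reverse := by
    apply List.takeWhile_eq_self_iff.mpr
    intro x hx
    simp only [decide_eq_true_eq]
    rintro rfl
    exact h (by simpa using hx)
  unfold dropToLastOcc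
  rw [h2, List.reverse_reverse]

lemma dropToLastOcc_length_lt {a : V} {l : List V} (h : a ∈ l) :
    (dropToLastOcc a l).length < l.length := by
  rcases Nat.lt_or_ge (dropToLastOcc a l).length l.length with h1 | h1
  · exact h1
  · exfalso
    have heq : dropToLastOcc a l = l :=
      (dropToLastOcc_suffix a l).eq_of_length
        (le_antisymm (dropToLastOcc_length_le a l) h1)
    rw [← heq] at h
    exact not_mem_dropToLastOcc a l h

lemma mem_of_mem_PLE {S : Finset V} : ∀ (n : ℕ) (l : List V), l.length ≤ n →
    ∀ {b : V}, b ∈ PLE S l → b ∈ l := by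
  intro n
  induction n with
  | zero =>
    intro l hl b hb
    have : l = [] := List.length_eq_zero_iff.mp (Nat.le_zero.mp hl)
    subst this; simp [PLE_nil] at hb
  | succ n ih =>
    intro l hl b hb
    match l with
    | [] => simp [PLE_nil] at hb
    | a :: rest =>
      have hrl : rest.length ≤ n := Nat.succ_le_succ_iff.mp (by simpa using hl)
      rw [PLE_cons] at hb
      by_cases ha : a ∈ S
      · by_cases hlast : a = (a :: rest).getLast (List.cons_ne_nil a rest)
        · rw [if_pos ha, if_pos hlast] at hb
          simp only [List.mem_singleton] at hb; simp [hb]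
        · rw [if_pos ha, if_neg hlast] at hb
          simp only [List.mem_cons] at hb
          rcases hb with rfl | hb
          · simp
          · have hlen : (dropToLastOcc a rest).length ≤ n :=
              le_trans (dropToLastOcc_length_le a rest) hrl
            exact List.mem_cons_of_mem a
              ((dropToLastOcc_sublist a rest).mem (ih _ hlen hb))
      · by_cases hrest : rest = []
        · rw [if_neg ha, if_pos hrest] at hb
          simp only [List.mem_singleton] at hb; simp [hb]
        · rw [if_neg ha, if_neg hrest] at hb
          simp only [List.mem_cons] at hb
          rcases hb with rfl | hb
          · simp
          · exact List.mem_cons_of_mem a (ih rest hrl hb)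

lemma mem_of_mem_PLE' {S : Finset V} {l : List V} {b : V} (hb : b ∈ PLE S l) :
    b ∈ l := mem_of_mem_PLE l.length l le_rfl hb

lemma PLE_ne_nil {S : Finset V} {l : List V} (h : l ≠ []) : PLE S l ≠ [] := by
  match l with
  | a :: rest =>
    rw [PLE_cons]
    split <;> split <;> simp

lemma getLast_cons_mem (a : V) {rest : List V} (h : rest ≠ []) :
    (a :: rest).getLast (List.cons_ne_nil a rest) ∈ rest := by
  rw [List.getLast_cons h]; exact List.getLast_mem h

lemma ne_getLast_of_not_mem {a : V} {rest : List V} (h : a ∉ rest) (hr : rest ≠ []) :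
    a ≠ (a :: rest).getLast (List.cons_ne_nil a rest) := by
  intro he
  exact h (he ▸ getLast_cons_mem a hr)

lemma PLE_cons_mem_eq {S : Finset V} {a : V} {rest : List V} (ha : a ∈ S)
    (he : a = (a :: rest).getLast (List.cons_ne_nil a rest)) :
    PLE S (a :: rest) = [a] := by rw [PLE_cons, if_pos ha, if_pos he]

lemma PLE_cons_mem_ne {S : Finset V} {a : V} {rest : List V} (ha : a ∈ S)
    (he : a ≠ (a :: rest).getLast (List.cons_ne_nil a rest)) :
    PLE S (a :: rest) = a :: PLE S (dropToLastOcc a rest) := by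
  rw [PLE_cons, if_pos ha, if_neg he]

lemma PLE_cons_not_mem_nil {S : Finset V} {a : V} (ha : a ∉ S) :
    PLE S [a] = [a] := by rw [PLE_cons, if_neg ha, if_pos rfl]

lemma PLE_cons_not_mem {S : Finset V} {a : V} {rest : List V} (ha : a ∉ S)
    (hr : rest ≠ []) : PLE S (a :: rest) = a :: PLE S rest := by
  rw [PLE_cons, if_neg ha, if_neg hr]

/-- If `a ∈ S` occurs nowhere in `rest ≠ []`, the `PLE` step is a plain step. -/
lemma PLE_cons_mem_not_mem {S : Finset V} {a : V} {rest : List V} (ha : a ∈ S)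
    (h : a ∉ rest) (hr : rest ≠ []) : PLE S (a :: rest) = a :: PLE S rest := by
  rw [PLE_cons_mem_ne ha (ne_getLast_of_not_mem h hr), dropToLastOcc_of_not_mem h]

lemma PLE_singleton (S : Finset V) (a : V) : PLE S [a] = [a] := by
  by_cases ha : a ∈ S
  · exact PLE_cons_mem_eq ha (by simp)
  · exact PLE_cons_not_mem_nil ha

lemma PLE_length_le (S : Finset V) : ∀ (n : ℕ) (l : List V), l.length ≤ n →
    (PLE S l).length ≤ l.length := by
  intro n
  induction n with
  | zero =>
    intro l hl
    have : l = [] := List.length_eq_zero_iff.mp (Nat.le_zero.mp hl)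
    subst this; simp [PLE_nil]
  | succ n ih =>
    intro l hl
    match l with
    | [] => simp [PLE_nil]
    | a :: rest =>
      have hrl : rest.length ≤ n := Nat.succ_le_succ_iff.mp (by simpa using hl)
      rw [PLE_cons]
      by_cases ha : a ∈ S
      · rw [if_pos ha]
        by_cases hlast : a = (a :: rest).getLast (List.cons_ne_nil a rest)
        · rw [if_pos hlast]; simp
        · rw [if_neg hlast]
          have h1 : (dropToLastOcc a rest).length ≤ n :=
            le_trans (dropToLastOcc_length_le a rest) hrl
          have := ih _ h1
          have := dropToLastOcc_length_le a rest
          simp only [List.length_cons]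
          omega
      · rw [if_neg ha]
        by_cases hr : rest = []
        · rw [if_pos hr]; subst hr; simp
        · rw [if_neg hr]
          have := ih rest hrl
          simp only [List.length_cons]
          omega

lemma PLE_length_le' (S : Finset V) (l : List V) : (PLE S l).length ≤ l.length :=
  PLE_length_le S l.length l le_rfl

lemma count_le_of_sublist {l₁ l₂ : List V} (h : List.Sublist l₁ l₂) (s : V) :
    l₁.count s ≤ l₂.count s := h.count_le s

lemma PLE_eq_self {S : Finset V} : ∀ (n : ℕ) (l : List V), l.length ≤ n →
    (∀ s ∈ S, l.count s ≤ 1) → PLE S l = l := by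
  intro n
  induction n with
  | zero =>
    intro l hl _
    have : l = [] := List.length_eq_zero_iff.mp (Nat.le_zero.mp hl)
    subst this; simp [PLE_nil]
  | succ n ih =>
    intro l hl hc
    match l with
    | [] => simp [PLE_nil]
    | a :: rest =>
      have hrl : rest.length ≤ n := Nat.succ_le_succ_iff.mp (by simpa using hl)
      have hcr : ∀ s ∈ S, rest.count s ≤ 1 := fun s hs =>
        le_trans (count_le_of_sublist (List.sublist_cons_self a rest) s) (hc s hs)
      by_cases ha : a ∈ S
      · have hac : a ∉ rest := by
          have := hc a ha
          rw [List.count_cons_self] at this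
          exact List.count_eq_zero.mp (by omega)
        by_cases hr : rest = []
        · subst hr; exact PLE_singleton S a
        · rw [PLE_cons_mem_not_mem ha hac hr, ih rest hrl hcr]
      · by_cases hr : rest = []
        · subst hr; exact PLE_singleton S a
        · rw [PLE_cons_not_mem ha hr, ih rest hrl hcr]

lemma count_le_of_PLE_eq_self {S : Finset V} : ∀ (n : ℕ) (l : List V), l.length ≤ n →
    PLE S l = l → ∀ s ∈ S, l.count s ≤ 1 := by
  intro n
  induction n with
  | zero =>
    intro l hl _ s _
    have : l = [] := List.length_eq_zero_iff.mp (Nat.le_zero.mp hl)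
    subst this; simp
  | succ n ih =>
    intro l hl hfix s hs
    match l with
    | [] => simp
    | a :: rest =>
      have hrl : rest.length ≤ n := Nat.succ_le_succ_iff.mp (by simpa using hl)
      by_cases ha : a ∈ S
      · by_cases hlast : a = (a :: rest).getLast (List.cons_ne_nil a rest)
        · rw [PLE_cons_mem_eq ha hlast] at hfix
          have : rest = [] := by
            injection hfix with _ h; exact h.symm
          subst this; simp [List.count_singleton']
          split <;> simp
        · rw [PLE_cons_mem_ne ha hlast] at hfix
          have hfix' : PLE S (dropToLastOcc a rest) = rest := by
            simpa using hfix
          have hanr : a ∉ rest := by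
            intro hmem
            have h1 := dropToLastOcc_length_lt hmem
            have h2 := PLE_length_le' S (dropToLastOcc a rest)
            have h3 := congrArg List.length hfix'
            omega
          rw [dropToLastOcc_of_not_mem hanr] at hfix'
          have hcr := ih rest hrl hfix' s hs
          rw [List.count_cons]
          by_cases hsa : s = a
          · subst hsa
            have : rest.count s = 0 := List.count_eq_zero.mpr hanr
            simp [this]
          · simp [Ne.symm hsa, hcr]
      · by_cases hr : rest = []
        · subst hr; simp [List.count_singleton']
          split <;> simp
        · rw [PLE_cons_not_mem ha hr] at hfix
          have hfix' : PLE S rest = rest := by simpa using hfix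
          have hcr := ih rest hrl hfix' s hs
          have hsa : s ≠ a := fun h => ha (h ▸ hs)
          rw [List.count_cons]
          simp [Ne.symm hsa, hcr]

lemma PLE_congr {S T : Finset V} : ∀ (n : ℕ) (l : List V), l.length ≤ n →
    (∀ b ∈ l, (b ∈ S ↔ b ∈ T)) → PLE S l = PLE T l := by
  intro n
  induction n with
  | zero =>
    intro l hl _
    have : l = [] := List.length_eq_zero_iff.mp (Nat.le_zero.mp hl)
    subst this; simp [PLE_nil]
  | succ n ih =>
    intro l hl hmem
    match l with
    | [] => simp [PLE_nil]
    | a :: rest =>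
      have hrl : rest.length ≤ n := Nat.succ_le_succ_iff.mp (by simpa using hl)
      have ha : a ∈ S ↔ a ∈ T := hmem a (by simp)
      rw [PLE_cons, PLE_cons]
      by_cases haS : a ∈ S
      · rw [if_pos haS, if_pos (ha.mp haS)]
        by_cases hlast : a = (a :: rest).getLast (List.cons_ne_nil a rest)
        · rw [if_pos hlast, if_pos hlast]
        · rw [if_neg hlast, if_neg hlast]
          have h1 : (dropToLastOcc a rest).length ≤ n :=
            le_trans (dropToLastOcc_length_le a rest) hrl
          rw [ih _ h1 (fun b hb => hmem b
            (List.mem_cons_of_mem a ((dropToLastOcc_sublist a rest).mem hb)))]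
      · rw [if_neg haS, if_neg (fun h => haS (ha.mpr h))]
        by_cases hr : rest = []
        · rw [if_pos hr, if_pos hr]
        · rw [if_neg hr, if_neg hr]
          rw [ih rest hrl (fun b hb => hmem b (List.mem_cons_of_mem a hb))]

variable [Fintype V]

/-- The (full) loop erasure `𝔏 = 𝔏_V`. -/
def LE : List V → List V := PLE Finset.univ

/-- Iterated partial loop erasure `𝔏_{W m} ∘ ⋯ ∘ 𝔏_{W 2} ∘ 𝔏_{W 1}`. -/
def iterPLE (W : ℕ → Finset V) : ℕ → List V → List V
  | 0, l => l
  | n + 1, l => PLE (W (n + 1)) (iterPLE W n l)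


section StepLemma

lemma LE_nil : LE ([] : List V) = [] := PLE_nil _

lemma LE_cons_eq {a : V} {rest : List V}
    (he : a = (a :: rest).getLast (List.cons_ne_nil a rest)) :
    LE (a :: rest) = [a] := PLE_cons_mem_eq (Finset.mem_univ a) he

lemma LE_cons_ne {a : V} {rest : List V}
    (he : a ≠ (a :: rest).getLast (List.cons_ne_nil a rest)) :
    LE (a :: rest) = a :: LE (dropToLastOcc a rest) :=
  PLE_cons_mem_ne (Finset.mem_univ a) he

lemma LE_cons_not_mem {a : V} {rest : List V} (h : a ∉ rest) (hr : rest ≠ []) :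
    LE (a :: rest) = a :: LE rest :=
  PLE_cons_mem_not_mem (Finset.mem_univ a) h hr

lemma LE_singleton (a : V) : LE [a] = [a] := PLE_singleton _ a

/-- The key step lemma. -/
lemma step_LE (S : Finset V) (x : V) (hx : x ∉ S) :
    ∀ (n : ℕ) (u : List V), u.length ≤ n →
      (∀ s ∈ S, u.count s ≤ 1) →
      (∀ z ∈ (LE u).takeWhile (fun z => z ≠ x), z ∈ S) →
      LE (PLE (insert x S) u) = LE u ∧
        ∀ s ∈ insert x S, (PLE (insert x S) u).count s ≤ 1 := by
  intro n
  induction n with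
  | zero =>
    intro u hl _ _
    have : u = [] := List.length_eq_zero_iff.mp (Nat.le_zero.mp hl)
    subst this
    refine ⟨by rw [PLE_nil], by simp [PLE_nil]⟩
  | succ n ih =>
    intro u hl hcount hpre
    match u with
    | [] => exact ⟨by rw [PLE_nil], by simp [PLE_nil]⟩
    | a :: rest =>
      have hrl : rest.length ≤ n := Nat.succ_le_succ_iff.mp (by simpa using hl)
      by_cases haS : a ∈ S
      · -- head in S: occurs at most once
        have hanr : a ∉ rest := by
          have := hcount a haS
          rw [List.count_cons_self] at this
          exact List.count_eq_zero.mp (by omega)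
        by_cases hr : rest = []
        · subst hr
          rw [PLE_singleton]
          exact ⟨rfl, by intro s _; simp [List.count_singleton']; split <;> simp⟩
        · have hne : a ≠ (a :: rest).getLast (List.cons_ne_nil a rest) :=
            ne_getLast_of_not_mem hanr hr
          have hLE : LE (a :: rest) = a :: LE rest := LE_cons_not_mem hanr hr
          have hPLE : PLE (insert x S) (a :: rest) = a :: PLE (insert x S) rest :=
            PLE_cons_mem_not_mem (Finset.mem_insert_of_mem haS) hanr hr
          have hax : a ≠ x := fun h => hx (h ▸ haS)
          have hpre' : ∀ z ∈ (LE rest).takeWhile (fun z => z ≠ x), z ∈ S := by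
            intro z hz
            apply hpre
            rw [hLE, List.takeWhile_cons_of_pos (by simpa using hax)]
            exact List.mem_cons_of_mem a hz
          have hcount' : ∀ s ∈ S, rest.count s ≤ 1 := fun s hs =>
            le_trans (count_le_of_sublist (List.sublist_cons_self a rest) s) (hcount s hs)
          obtain ⟨ihLE, ihC⟩ := ih rest hrl hcount' hpre'
          have hPne : PLE (insert x S) rest ≠ [] := PLE_ne_nil hr
          have hanp : a ∉ PLE (insert x S) rest := fun h => hanr (mem_of_mem_PLE' h)
          constructor
          · rw [hPLE, LE_cons_not_mem hanp hPne, ihLE, hLE]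
          · intro s hs
            rw [hPLE, List.count_cons]
            by_cases hsa : s = a
            · subst hsa
              have : (PLE (insert x S) rest).count s = 0 := List.count_eq_zero.mpr hanp
              simp [this]
            · simp [Ne.symm hsa, ihC s hs]
      · by_cases hax : a = x
        · subst hax
          -- head is x
          by_cases hlast : a = (a :: rest).getLast (List.cons_ne_nil a rest)
          · rw [PLE_cons_mem_eq (Finset.mem_insert_self a S) hlast, LE_cons_eq hlast,
              LE_singleton]
            exact ⟨rfl, by intro s _; simp [List.count_singleton']; split <;> simp⟩
          · have hr : rest ≠ [] := by rintro rfl; exact hlast (by simp)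
            set r' := dropToLastOcc a rest with hr'def
            have hxnr' : a ∉ r' := not_mem_dropToLastOcc a rest
            have hcr' : ∀ s ∈ S, r'.count s ≤ 1 := fun s hs =>
              le_trans (count_le_of_sublist ((dropToLastOcc_sublist a rest).trans
                (List.sublist_cons_self a rest)) s) (hcount s hs)
            have hPr' : PLE (insert a S) r' = r' := by
              rw [PLE_congr r'.length r' le_rfl
                (fun b hb => ?_), PLE_eq_self r'.length r' le_rfl hcr']
              have hbx : b ≠ a := fun h => hxnr' (h ▸ hb)
              simp [Finset.mem_insert, hbx]
            have hPLE : PLE (insert a S) (a :: rest) = a :: r' := by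
              rw [PLE_cons_mem_ne (Finset.mem_insert_self a S) hlast, hPr']
            have hLE : LE (a :: rest) = a :: LE r' := LE_cons_ne hlast
            constructor
            · rw [hPLE]
              by_cases hr'nil : r' = []
              · rw [hr'nil, LE_singleton, hLE, hr'nil, LE_nil]
              · rw [LE_cons_not_mem hxnr' hr'nil, hLE]
            · intro s hs
              rw [hPLE, List.count_cons]
              rcases Finset.mem_insert.mp hs with rfl | hsS
              · have : r'.count s = 0 := List.count_eq_zero.mpr hxnr'
                simp [this]
              · have hsa : s ≠ a := fun h => hx (h ▸ hsS)
                simp [Ne.symm hsa, hcr' s hsS]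
        · -- head not in S and not x: contradicts the takeWhile hypothesis
          exfalso
          have hhead : ∃ t, LE (a :: rest) = a :: t := by
            by_cases hlast : a = (a :: rest).getLast (List.cons_ne_nil a rest)
            · exact ⟨[], LE_cons_eq hlast⟩
            · exact ⟨_, LE_cons_ne hlast⟩
          obtain ⟨t, ht⟩ := hhead
          have : a ∈ (LE (a :: rest)).takeWhile (fun z => z ≠ x) := by
            rw [ht, List.takeWhile_cons_of_pos (by simpa using hax)]
            simp
          exact haS (hpre a this)

end StepLemma
/-- The remaining suffix `w|_{[n_j , η]}` of the loop-erasing walk of `𝔏` the first time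
its current value equals `b` (`[]` if this never happens). -/
def LEsuffixAt (b : V) : List V → List V
  | [] => []
  | a :: rest =>
    if a = b then a :: rest
    else if a = (a :: rest).getLast (List.cons_ne_nil a rest) then []
    else LEsuffixAt b (dropToLastOcc a rest)
termination_by l => l.length
decreasing_by
  simpa using Nat.lt_succ_of_le (dropToLastOcc_length_le a rest)

/-- Entry time `τ_A` into `A ⊆ V`, valued in `ℕ∞`. -/
noncomputable def entryTime (A : Finset V) (ω : ℕ → V) : ℕ∞ :=
  sInf {m : ℕ∞ | ∃ n : ℕ, m = (n : ℕ∞) ∧ ω n ∈ A}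

/-- Entry time `τ_A` as a natural number (junk value `0` when `A` is never visited). -/
noncomputable def entryTimeNat (A : Finset V) (ω : ℕ → V) : ℕ :=
  sInf {n : ℕ | ω n ∈ A}

/-- The random finite path `X|_{[0, τ_A]} = (X_0, X_1, …, X_{τ_A})`. -/
noncomputable def stoppedPath (A : Finset V) (ω : ℕ → V) : List V :=
  (List.range (entryTimeNat A ω + 1)).map ω

/-- Iterated hitting times `τ̊_W^{(n)}` of `W`, valued in `ℕ∞` (with the convention
`τ̊_W^{(0)} = 0`). -/
noncomputable def iterHit (W : Finset V) (ω : ℕ → V) : ℕ → ℕ∞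
  | 0 => 0
  | n + 1 => sInf {m : ℕ∞ | ∃ k : ℕ, m = (k : ℕ∞) ∧ iterHit W ω n < (k : ℕ∞) ∧ ω k ∈ W}

/-- The time `τ̊_W^{(n)} ∧ τ_A`, as a natural number. -/
noncomputable def traceTime (W A : Finset V) (ω : ℕ → V) (n : ℕ) : ℕ :=
  (iterHit W ω n ⊓ entryTime A ω).toNat

variable [MeasurableSpace V]

/-- The trace process `X̃_n = X_{τ̊_W^{(n)} ∧ τ_A}` (so `X̃_0 = X_0`). -/
noncomputable def traceProc (W A : Finset V) (ω : ℕ → V) (n : ℕ) : V :=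
  ω (traceTime W A ω n)

/-- The Green function `G_B(x, y) = 𝔼_x(#{0 ≤ n < τ_{V∖B} : X_n = y})`. -/
noncomputable def green (μ : V → Measure (ℕ → V)) (B : Finset V) (x y : V) : ℝ :=
  ∑' n : ℕ, (μ x {ω | ω n = y ∧ ∀ k ≤ n, ω k ∈ B}).toReal


theorem LE_eq_iterPLE_on_adapted_refinement
    {V : Type*} [Fintype V] [DecidableEq V]
    (V₁ : Finset V) (hV₁ : V₁.Nonempty) (hV₁ne : V₁ ≠ Finset.univ)
    (k : ℕ) (v : ℕ → V)
    (hvinj : ∀ i ≤ k, ∀ j ≤ k, v i = v j → i = j)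
    (hvout : ∀ j ≤ k, v j ∉ V₁)
    (W : ℕ → Finset V)
    (hW1 : W 1 = V₁)
    (hWm : W ((Finset.univ \ V₁).card + 1) = Finset.univ)
    (hWstep : ∀ j : ℕ, 1 ≤ j → j ≤ (Finset.univ \ V₁).card →
      W j ⊆ W (j + 1) ∧ (W (j + 1) \ W j).card = 1)
    (hWv : ∀ j ≤ k, W (j + 2) \ W (j + 1) = {v j})
    (w : List V) (hwfix : PLE V₁ w = w)
    (hwproj : (LE w).filter (fun z => z ∉ V₁) = (List.range (k + 1)).map v) :
    LE w = iterPLE (fun n => W (n + 1)) (Finset.univ \ V₁).card w := by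
  set M := (Finset.univ \ V₁).card with hMdef
  set fn := fun n => W (n + 1) with hfndef
  have hM : 1 ≤ M := by
    rw [hMdef]
    refine Finset.card_pos.mpr (Finset.sdiff_nonempty.mpr ?_)
    intro hsub
    exact hV₁ne (Finset.univ_subset_iff.mp hsub)
  -- monotonicity of the chain
  have hkey : ∀ (d i : ℕ), 1 ≤ i → i + d ≤ M + 1 → W i ⊆ W (i + d) := by
    intro d
    induction d with
    | zero => intro i _ _; simp
    | succ d ihd =>
      intro i h1 hle
      have hstep := (hWstep (i + d) (by omega) (by omega)).1
      have : i + (d + 1) = (i + d) + 1 := by omega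
      rw [this]
      exact (ihd i h1 (by omega)).trans hstep
  have hmono : ∀ i j : ℕ, 1 ≤ i → i ≤ j → j ≤ M + 1 → W i ⊆ W j := by
    intro i j h1 hij hjM
    obtain ⟨d, rfl⟩ := Nat.exists_eq_add_of_le hij
    exact hkey d i h1 (by omega)
  have hVcount : ∀ s ∈ V₁, w.count s ≤ 1 :=
    count_le_of_PLE_eq_self w.length w le_rfl hwfix
  have hvmem : ∀ i ≤ k, v i ∈ W (i + 2) := by
    intro i hi
    have h : v i ∈ W (i + 2) \ W (i + 1) := by
      rw [hWv i hi]; exact Finset.mem_singleton_self _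
    exact (Finset.mem_sdiff.mp h).1
  have hinsert : ∀ j : ℕ, 1 ≤ j → j ≤ M → ∃ x, x ∉ W j ∧ W (j + 1) = insert x (W j) := by
    intro j h1 h2
    obtain ⟨hsub, hcard⟩ := hWstep j h1 h2
    obtain ⟨x, hxeq⟩ := Finset.card_eq_one.mp hcard
    have hxW : x ∈ W (j + 1) \ W j := hxeq ▸ Finset.mem_singleton_self x
    refine ⟨x, (Finset.mem_sdiff.mp hxW).2, ?_⟩
    ext b
    constructor
    · intro hb
      by_cases hbW : b ∈ W j
      · exact Finset.mem_insert_of_mem hbW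
      · have : b ∈ W (j + 1) \ W j := Finset.mem_sdiff.mpr ⟨hb, hbW⟩
        rw [hxeq] at this
        exact Finset.mem_insert.mpr (Or.inl (Finset.mem_singleton.mp this))
    · intro hb
      rcases Finset.mem_insert.mp hb with rfl | hbW
      · exact (Finset.mem_sdiff.mp hxW).1
      · exact hsub hbW
  -- the prefix condition, stated for `LE w`
  have hpre : ∀ (j : ℕ) (x : V), j + 1 ≤ M → W (j + 2) \ W (j + 1) = {x} →
      ∀ z ∈ (LE w).takeWhile (fun z => z ≠ x), z ∈ W (j + 1) := by
    intro j x hjM hxdiff z hz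
    have hzt : z ∈ (LE w).takeWhile (fun z => z ≠ x) := hz
    have hzLE : z ∈ LE w :=
      ((List.takeWhile_prefix _).sublist).mem hz
    by_cases hzV : z ∈ V₁
    · exact hmono 1 (j + 1) le_rfl (by omega) (by omega) (hW1 ▸ hzV)
    · -- z is some v i
      by_cases hjk : j ≤ k
      · -- x = v j
        have hxvj : x = v j := by
          have := hWv j hjk
          rw [hxdiff] at this
          exact Finset.singleton_injective this
        subst hxvj
        -- the filtered takeWhile is a strict initial segment of v 0 .. v k
        set t := (LE w).takeWhile (fun z => z ≠ v j) with htdef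
        have htw : ∀ y ∈ t, y ≠ v j := by
          intro y hy
          simpa using List.mem_takeWhile_imp hy
        set p : V → Bool := fun z => z ∉ V₁ with hpdef
        have hpref : t.filter p <+: (List.range (k + 1)).map v := by
          refine ⟨((LE w).dropWhile (fun z => z ≠ v j)).filter p, ?_⟩
          rw [← hwproj, ← List.filter_append]
          congr 1
          exact List.takeWhile_append_dropWhile
        set F := t.filter p with hFdef
        have hlen : F.length ≤ k + 1 := by
          simpa using hpref.length_le
        have hFeq : F = (List.range F.length).map v := by
          have h1 := List.prefix_iff_eq_take.mp hpref
          have h2 : (List.map v (List.range (k + 1))).take F.length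
              = (List.range F.length).map v := by
            rw [← List.map_take, List.take_range, Nat.min_eq_left hlen]
          exact h1.trans h2
        have hnj : F.length ≤ j := by
          by_contra hcon
          push_neg at hcon
          have : v j ∈ F := by
            rw [hFeq]
            exact List.mem_map_of_mem (f := v) (List.mem_range.mpr hcon)
          exact htw _ (List.mem_of_mem_filter this) rfl
        have hzF : z ∈ F := by
          rw [hFdef]
          refine List.mem_filter.mpr ⟨hzt, by simpa [hpdef] using hzV⟩
        rw [hFeq] at hzF
        obtain ⟨i, hi, hiz⟩ := List.mem_map.mp hzF
        have hik : i < F.length := List.mem_range.mp hi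
        rw [← hiz]
        exact hmono (i + 2) (j + 1) (by omega) (by omega) (by omega)
          (hvmem i (by omega))
      · -- j > k : all of LE w lies in W (j+1)
        have hzf : z ∈ (LE w).filter (fun z => z ∉ V₁) :=
          List.mem_filter.mpr ⟨hzLE, by simpa using hzV⟩
        rw [hwproj] at hzf
        obtain ⟨i, hi, hiz⟩ := List.mem_map.mp hzf
        have hik : i < k + 1 := List.mem_range.mp hi
        rw [← hiz]
        exact hmono (i + 2) (j + 1) (by omega) (by omega) (by omega)
          (hvmem i (by omega))
  -- the invariant
  have hinv : ∀ j : ℕ, j ≤ M →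
      LE (iterPLE fn j w) = LE w ∧
        ∀ s ∈ W (j + 1), (iterPLE fn j w).count s ≤ 1 := by
    intro j
    induction j with
    | zero =>
      intro _
      exact ⟨rfl, by rw [hW1]; exact hVcount⟩
    | succ j ihj =>
      intro hjM
      obtain ⟨hLEj, hCj⟩ := ihj (by omega)
      obtain ⟨x, hxnot, hWeq⟩ := hinsert (j + 1) (by omega) hjM
      have hWeq' : W (j + 2) = insert x (W (j + 1)) := hWeq
      have hxdiff : W (j + 2) \ W (j + 1) = {x} := by
        ext b
        simp only [Finset.mem_sdiff, hWeq', Finset.mem_insert, Finset.mem_singleton]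
        constructor
        · rintro ⟨rfl | hb, hnb⟩
          · rfl
          · exact absurd hb hnb
        · rintro rfl
          exact ⟨Or.inl rfl, hxnot⟩
      have hpre' : ∀ z ∈ (LE (iterPLE fn j w)).takeWhile (fun z => z ≠ x),
          z ∈ W (j + 1) := by
        rw [hLEj]
        exact hpre j x hjM hxdiff
      obtain ⟨h1, h2⟩ := step_LE (W (j + 1)) x hxnot _ (iterPLE fn j w) le_rfl hCj hpre'
      have hit : iterPLE fn (j + 1) w = PLE (W (j + 2)) (iterPLE fn j w) := rfl
      constructor
      · rw [hit, hWeq, h1, hLEj]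
      · intro s hs
        rw [hit, hWeq]
        exact h2 s (hWeq ▸ hs)
  -- conclusion
  obtain ⟨M', hM'⟩ : ∃ M', M = M' + 1 := ⟨M - 1, by omega⟩
  have hfin : iterPLE fn M w = PLE (W (M + 1)) (iterPLE fn M' w) := by
    rw [hM']; rfl
  rw [hfin, hWm]
  have : PLE Finset.univ (iterPLE fn M' w) = LE (iterPLE fn M' w) := rfl
  rw [this, (hinv M' (by omega)).1]

end LERW
end

section
/- Let (Ω, X_n, ℙ_x) be a Markov chain on a nonempty finite set V, let B ⊆ V with B ≠ V satisfy ℙ_z(τ_{V∖B} < ∞) = 1 for every z ∈ B, and let x, y ∈ B with x ≠ y. Then G_{B∖{y}}(x,x) = (1 − ℙ_x(τ_y < τ_{V∖B}) · ℙ_y(τ_x < τ_{V∖B})) · G_B(x,x), where τ_y = τ_{{y}} and τ_x = τ_{{x}}. -/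
open MeasureTheory

namespace LERW

variable {V : Type*} [DecidableEq V]

variable [Fintype V]

variable [MeasurableSpace V]

set_option linter.unusedSectionVars false

section Aux

noncomputable def QA (P : V → V → ℝ) (A : Finset V) : Matrix V V ENNReal :=
  fun a b => if b ∈ A then ENNReal.ofReal (P a b) else 0

noncomputable def wt (P : V → V → ℝ) (n : ℕ) (c : Fin (n + 1) → V) : ENNReal :=
  ∏ i : Fin n, ENNReal.ofReal (P (c i.castSucc) (c i.succ))

def extC (n : ℕ) (c : Fin (n + 1) → V) : ℕ → V := fun i => c ⟨min i n, by omega⟩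

lemma extC_eq {n : ℕ} (c : Fin (n + 1) → V) {i : ℕ} (h : i ≤ n) :
    extC n c i = c ⟨i, by omega⟩ := by simp [extC, Nat.min_eq_left h]

lemma wt_eq_prod_range (P : V → V → ℝ) (n : ℕ) (c : Fin (n + 1) → V) :
    wt P n c = ∏ k ∈ Finset.range n, ENNReal.ofReal (P (extC n c k) (extC n c (k + 1))) := by
  rw [← Fin.prod_univ_eq_prod_range (fun k => ENNReal.ofReal (P (extC n c k) (extC n c (k + 1)))) n]
  refine Finset.prod_congr rfl fun i _ => ?_
  have h1 : extC n c i = c i.castSucc := by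
    rw [extC_eq c (le_of_lt i.isLt)]; rfl
  have h2 : extC n c (i + 1) = c i.succ := by
    rw [extC_eq c (by omega : (i : ℕ) + 1 ≤ n)]; rfl
  rw [h1, h2]

variable [MeasurableSingletonClass V]

lemma meas_cyl (P : V → V → ℝ) (μ : V → Measure (ℕ → V)) (hP0 : ∀ a b : V, 0 ≤ P a b)
    (hlaw : ∀ (a : V) (n : ℕ) (y : ℕ → V),
      μ a {ω | ∀ i ≤ n, ω i = y i} =
        ENNReal.ofReal ((if a = y 0 then (1 : ℝ) else 0) *
          ∏ i ∈ Finset.Icc 1 n, P (y (i - 1)) (y i)))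
    (a : V) (n : ℕ) (A : ℕ → Finset V) :
    μ a {ω | ∀ k ≤ n, ω k ∈ A k} =
      ∑ c : Fin (n + 1) → V,
        if a = c 0 ∧ ∀ i : Fin (n + 1), c i ∈ A (i : ℕ) then wt P n c else 0 := by
  classical
  set T : Finset (Fin (n + 1) → V) :=
    Finset.univ.filter (fun c : Fin (n + 1) → V => ∀ i : Fin (n + 1), c i ∈ A (i : ℕ)) with hT
  have hset : {ω : ℕ → V | ∀ k ≤ n, ω k ∈ A k} =
      ⋃ c ∈ T, {ω : ℕ → V | ∀ i ≤ n, ω i = extC n c i} := by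
    ext ω
    simp only [Set.mem_setOf_eq, Set.mem_iUnion, hT, Finset.mem_filter, Finset.mem_univ, true_and]
    constructor
    · intro h
      refine ⟨fun i => ω (i : ℕ), fun i => h _ (by omega), fun i hi => ?_⟩
      rw [extC_eq _ hi]
    · rintro ⟨c, hc, hω⟩ k hk
      rw [hω k hk, extC_eq _ hk]
      exact hc ⟨k, by omega⟩
  have hdisj : (↑T : Set (Fin (n + 1) → V)).PairwiseDisjoint
      (fun c => {ω : ℕ → V | ∀ i ≤ n, ω i = extC n c i}) := by
    intro c _ c' _ hne
    refine Set.disjoint_left.2 fun ω h1 h2 => hne ?_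
    funext i
    have e1 := h1 (i : ℕ) (by omega)
    have e2 := h2 (i : ℕ) (by omega)
    rw [extC_eq _ (by omega : (i : ℕ) ≤ n)] at e1 e2
    simp only [Fin.eta] at e1 e2
    rw [← e1, ← e2]
  have hmeas : ∀ c ∈ T, MeasurableSet {ω : ℕ → V | ∀ i ≤ n, ω i = extC n c i} := by
    intro c _
    have : {ω : ℕ → V | ∀ i ≤ n, ω i = extC n c i} =
        ⋂ i, ⋂ (_ : i ≤ n), (fun ω : ℕ → V => ω i) ⁻¹' {extC n c i} := by
      ext ω; simp [Set.mem_iInter]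
    rw [this]
    exact MeasurableSet.iInter fun i => MeasurableSet.iInter fun _ =>
      (measurable_pi_apply i) (measurableSet_singleton _)
  rw [hset, measure_biUnion_finset hdisj hmeas]
  rw [Finset.sum_filter]
  refine Finset.sum_congr rfl fun c _ => ?_
  have h0 : extC n c 0 = c 0 := by rw [extC_eq c (Nat.zero_le n)]; rfl
  by_cases hQ : ∀ i : Fin (n + 1), c i ∈ A (i : ℕ)
  · rw [if_pos hQ, hlaw a n (extC n c), h0]
    by_cases hac : a = c 0
    · have hcond : a = c 0 ∧ ∀ i : Fin (n + 1), c i ∈ A (i : ℕ) := ⟨hac, hQ⟩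
      rw [if_pos hac, if_pos hcond, one_mul]
      rw [ENNReal.ofReal_prod_of_nonneg fun i _ => hP0 _ _]
      have hIccIco : Finset.Icc 1 n = Finset.Ico 1 (n + 1) := rfl
      rw [hIccIco, Finset.prod_Ico_eq_prod_range, wt_eq_prod_range]
      refine (Finset.prod_congr rfl fun k _ => ?_).symm
      have e1 : 1 + k - 1 = k := by omega
      have e2 : 1 + k = k + 1 := by omega
      rw [e1, e2]
    · rw [if_neg hac, if_neg (fun h => hac h.1), zero_mul, ENNReal.ofReal_zero]
  · rw [if_neg hQ, if_neg (fun h => hQ h.2)]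

noncomputable def mprod (P : V → V → ℝ) (A : ℕ → Finset V) : ℕ → Matrix V V ENNReal
  | 0 => 1
  | n + 1 => mprod P A n * QA P (A (n + 1))

def snocE (n : ℕ) : ((Fin (n + 1) → V) × V) ≃ (Fin (n + 2) → V) where
  toFun p := Fin.snoc p.1 p.2
  invFun c := (Fin.init c, c (Fin.last _))
  left_inv p := by
    ext i
    · simp [Fin.init_snoc]
    · simp
  right_inv c := by simp [Fin.snoc_init_self]

lemma wt_snoc (P : V → V → ℝ) (n : ℕ) (d : Fin (n + 1) → V) (b : V) :
    wt P (n + 1) (Fin.snoc d b) = wt P n d * ENNReal.ofReal (P (d (Fin.last n)) b) := by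
  unfold wt
  rw [Fin.prod_univ_castSucc]
  congr 1
  · refine Finset.prod_congr rfl fun i _ => ?_
    rw [Fin.succ_castSucc, Fin.snoc_castSucc, Fin.snoc_castSucc]
  · rw [Fin.succ_last, Fin.snoc_castSucc, Fin.snoc_last]

lemma forall_snoc {n : ℕ} (A : ℕ → Finset V) (d : Fin (n + 1) → V) (b : V) :
    (∀ i : Fin (n + 2), (Fin.snoc d b : Fin (n + 2) → V) i ∈ A (i : ℕ)) ↔
      (∀ i : Fin (n + 1), d i ∈ A (i : ℕ)) ∧ b ∈ A (n + 1) := by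
  constructor
  · intro h
    refine ⟨fun i => ?_, ?_⟩
    · have := h i.castSucc
      rwa [Fin.snoc_castSucc, Fin.coe_castSucc] at this
    · have := h (Fin.last (n + 1))
      rwa [Fin.snoc_last, Fin.val_last] at this
  · rintro ⟨h1, h2⟩ i
    induction i using Fin.lastCases with
    | last => rwa [Fin.snoc_last, Fin.val_last]
    | cast i => rw [Fin.snoc_castSucc, Fin.coe_castSucc]; exact h1 i

lemma sum_paths_eq_mprod (P : V → V → ℝ) (A : ℕ → Finset V) (a : V) :
    ∀ (n : ℕ) (z : V),
      (∑ c : Fin (n + 1) → V,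
        if (a = c 0 ∧ ∀ i : Fin (n + 1), c i ∈ A (i : ℕ)) ∧ c (Fin.last n) = z
        then wt P n c else 0) =
      if a ∈ A 0 then mprod P A n a z else 0 := by
  intro n
  induction n with
  | zero =>
    intro z
    rw [← Equiv.sum_comp (Equiv.funUnique (Fin 1) V).symm]
    have hterm : ∀ v : V,
        (if (a = (Equiv.funUnique (Fin 1) V).symm v 0 ∧
              ∀ i : Fin 1, (Equiv.funUnique (Fin 1) V).symm v i ∈ A (i : ℕ)) ∧
            (Equiv.funUnique (Fin 1) V).symm v (Fin.last 0) = z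
         then wt P 0 ((Equiv.funUnique (Fin 1) V).symm v) else (0 : ENNReal)) =
        if (a = v ∧ v ∈ A 0) ∧ v = z then 1 else 0 := by
      intro v
      by_cases h1 : a = v <;> by_cases h2 : v ∈ A 0 <;> by_cases h3 : v = z <;>
        simp [wt, h1, h2, h3, Fin.forall_fin_one]
    rw [Finset.sum_congr rfl fun v _ => hterm v]
    rw [mprod]
    by_cases haA : a ∈ A 0
    · rw [if_pos haA, Matrix.one_apply, Finset.sum_eq_single a]
      · simp [haA]
      · intro v _ hv
        rw [if_neg]; rintro ⟨⟨hh, -⟩, -⟩; exact hv hh.symm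
      · intro h; exact absurd (Finset.mem_univ a) h
    · rw [if_neg haA]
      refine Finset.sum_eq_zero fun v _ => ?_
      rw [if_neg]; rintro ⟨⟨hh1, hh2⟩, -⟩; exact haA (hh1 ▸ hh2)
  | succ n ih =>
    intro z
    calc (∑ c : Fin (n + 2) → V,
          if (a = c 0 ∧ ∀ i : Fin (n + 2), c i ∈ A (i : ℕ)) ∧ c (Fin.last (n + 1)) = z
          then wt P (n + 1) c else 0)
        = ∑ p : (Fin (n + 1) → V) × V,
            (if a = p.1 0 ∧ ∀ i : Fin (n + 1), p.1 i ∈ A (i : ℕ) then wt P n p.1 else 0) *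
            (if p.2 = z ∧ p.2 ∈ A (n + 1)
              then ENNReal.ofReal (P (p.1 (Fin.last n)) p.2) else 0) := by
          rw [← Equiv.sum_comp (snocE n)]
          refine Finset.sum_congr rfl fun p _ => ?_
          obtain ⟨d, b⟩ := p
          have h0 : (snocE n (d, b)) 0 = d 0 := by
            show (Fin.snoc d b : Fin (n + 2) → V) 0 = d 0
            have h00 : (0 : Fin (n + 2)) = (0 : Fin (n + 1)).castSucc := rfl
            rw [h00, Fin.snoc_castSucc]
          have hlast : (snocE n (d, b)) (Fin.last (n + 1)) = b := by
            show (Fin.snoc d b : Fin (n + 2) → V) (Fin.last (n + 1)) = b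
            rw [Fin.snoc_last]
          have hwt : wt P (n + 1) (snocE n (d, b)) =
              wt P n d * ENNReal.ofReal (P (d (Fin.last n)) b) := wt_snoc P n d b
          have hforall : (∀ i : Fin (n + 2), (snocE n (d, b)) i ∈ A (i : ℕ)) ↔
              (∀ i : Fin (n + 1), d i ∈ A (i : ℕ)) ∧ b ∈ A (n + 1) := forall_snoc A d b
          simp only [h0, hlast, hwt, hforall]
          by_cases h1 : a = d 0 <;> by_cases h2 : ∀ i : Fin (n + 1), d i ∈ A (i : ℕ) <;>
            by_cases h3 : b ∈ A (n + 1) <;> by_cases h4 : b = z <;>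
            simp [h1, h2, h3, h4]
      _ = ∑ d : Fin (n + 1) → V,
            (if a = d 0 ∧ ∀ i : Fin (n + 1), d i ∈ A (i : ℕ) then wt P n d else 0) *
            QA P (A (n + 1)) (d (Fin.last n)) z := by
          rw [Fintype.sum_prod_type]
          refine Finset.sum_congr rfl fun d _ => ?_
          dsimp only
          refine (Finset.mul_sum (Finset.univ : Finset V) _
            (if a = d 0 ∧ ∀ i : Fin (n + 1), d i ∈ A (i : ℕ) then wt P n d else (0 : ENNReal))).symm.trans ?_
          congr 1
          rw [Finset.sum_eq_single z]
          · by_cases hz : z ∈ A (n + 1) <;> simp [QA, hz]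
          · intro b _ hb; rw [if_neg (fun h => hb h.1)]
          · intro h; exact absurd (Finset.mem_univ z) h
      _ = ∑ w : V, ∑ d : Fin (n + 1) → V,
            (if (a = d 0 ∧ ∀ i : Fin (n + 1), d i ∈ A (i : ℕ)) ∧ d (Fin.last n) = w
              then wt P n d else 0) * QA P (A (n + 1)) w z := by
          rw [Finset.sum_comm]
          refine Finset.sum_congr rfl fun d _ => ?_
          rw [Finset.sum_eq_single (d (Fin.last n))]
          · by_cases hC : a = d 0 ∧ ∀ i : Fin (n + 1), d i ∈ A (i : ℕ)
            · rw [if_pos hC, if_pos ⟨hC, rfl⟩]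
            · rw [if_neg hC, if_neg (fun h => hC h.1)]
          · intro w _ hw
            have hne : ¬((a = d 0 ∧ ∀ i : Fin (n + 1), d i ∈ A (i : ℕ)) ∧
                d (Fin.last n) = w) := fun h => hw h.2.symm
            rw [if_neg hne, zero_mul]
          · intro h; exact absurd (Finset.mem_univ _) h
      _ = ∑ w : V, (if a ∈ A 0 then mprod P A n a w else 0) * QA P (A (n + 1)) w z := by
          refine Finset.sum_congr rfl fun w _ => ?_
          rw [← Finset.sum_mul, ih w]
      _ = if a ∈ A 0 then mprod P A (n + 1) a z else 0 := by
          rw [mprod, Matrix.mul_apply]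
          by_cases haA : a ∈ A 0
          · simp only [if_pos haA]
          · simp only [if_neg haA, zero_mul, Finset.sum_const_zero]

lemma sum_paths_eq_rowsum (P : V → V → ℝ) (A : ℕ → Finset V) (a : V) (n : ℕ) :
    (∑ c : Fin (n + 1) → V,
      if a = c 0 ∧ ∀ i : Fin (n + 1), c i ∈ A (i : ℕ) then wt P n c else 0) =
    if a ∈ A 0 then ∑ z : V, mprod P A n a z else 0 := by
  have expand : ∀ c : Fin (n + 1) → V,
      (if a = c 0 ∧ ∀ i : Fin (n + 1), c i ∈ A (i : ℕ) then wt P n c else 0) =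
      ∑ z : V, if (a = c 0 ∧ ∀ i : Fin (n + 1), c i ∈ A (i : ℕ)) ∧ c (Fin.last n) = z
        then wt P n c else 0 := by
    intro c
    rw [Finset.sum_eq_single (c (Fin.last n))]
    · by_cases hC : a = c 0 ∧ ∀ i : Fin (n + 1), c i ∈ A (i : ℕ)
      · rw [if_pos hC, if_pos ⟨hC, rfl⟩]
      · rw [if_neg hC, if_neg (fun h => hC h.1)]
    · intro w _ hw
      exact if_neg (fun h => hw h.2.symm)
    · intro h; exact absurd (Finset.mem_univ _) h
  rw [Finset.sum_congr rfl fun c _ => expand c, Finset.sum_comm]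
  rw [Finset.sum_congr rfl fun z _ => sum_paths_eq_mprod P A a n z]
  by_cases haA : a ∈ A 0
  · simp only [if_pos haA]
  · simp only [if_neg haA, Finset.sum_const_zero]

/-- Master bridge: measure of a "stay in `A k` at each step `k ≤ n`" event. -/
lemma meas_stay (P : V → V → ℝ) (μ : V → Measure (ℕ → V)) (hP0 : ∀ a b : V, 0 ≤ P a b)
    (hlaw : ∀ (a : V) (n : ℕ) (y : ℕ → V),
      μ a {ω | ∀ i ≤ n, ω i = y i} =
        ENNReal.ofReal ((if a = y 0 then (1 : ℝ) else 0) *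
          ∏ i ∈ Finset.Icc 1 n, P (y (i - 1)) (y i)))
    (a : V) (n : ℕ) (A : ℕ → Finset V) :
    μ a {ω | ∀ k ≤ n, ω k ∈ A k} =
      if a ∈ A 0 then ∑ z : V, mprod P A n a z else 0 := by
  rw [meas_cyl P μ hP0 hlaw a n A, sum_paths_eq_rowsum]

lemma mprod_congr (P : V → V → ℝ) {A A' : ℕ → Finset V} (n : ℕ)
    (h : ∀ i ≤ n, A i = A' i) : mprod P A n = mprod P A' n := by
  induction n with
  | zero => rfl
  | succ n ih =>
    rw [mprod, mprod, ih (fun i hi => h i (by omega)), h (n + 1) le_rfl]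

lemma mprod_const (P : V → V → ℝ) (B : Finset V) (n : ℕ) :
    mprod P (fun _ => B) n = QA P B ^ n := by
  induction n with
  | zero => rfl
  | succ n ih => rw [mprod, ih, pow_succ]

lemma meas_visit (P : V → V → ℝ) (μ : V → Measure (ℕ → V)) (hP0 : ∀ a b : V, 0 ≤ P a b)
    (hlaw : ∀ (a : V) (n : ℕ) (y : ℕ → V),
      μ a {ω | ∀ i ≤ n, ω i = y i} =
        ENNReal.ofReal ((if a = y 0 then (1 : ℝ) else 0) *
          ∏ i ∈ Finset.Icc 1 n, P (y (i - 1)) (y i)))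
    (a b : V) (n : ℕ) (S : Finset V) :
    μ a {ω | ω (n + 1) = b ∧ ∀ k ≤ n, ω k ∈ S} =
      if a ∈ S then ∑ w : V, (QA P S ^ n) a w * ENNReal.ofReal (P w b) else 0 := by
  classical
  set A : ℕ → Finset V := fun i => if i = n + 1 then {b} else S with hA
  have hev : {ω : ℕ → V | ω (n + 1) = b ∧ ∀ k ≤ n, ω k ∈ S} =
      {ω : ℕ → V | ∀ k ≤ n + 1, ω k ∈ A k} := by
    ext ω
    simp only [Set.mem_setOf_eq, hA]
    constructor
    · rintro ⟨h1, h2⟩ k hk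
      by_cases hkn : k = n + 1
      · subst hkn; simp [h1]
      · rw [if_neg hkn]; exact h2 k (by omega)
    · intro h
      refine ⟨?_, fun k hk => ?_⟩
      · have := h (n + 1) le_rfl
        simpa using this
      · have := h k (by omega)
        rwa [if_neg (by omega)] at this
  rw [hev, meas_stay P μ hP0 hlaw a (n + 1) A]
  have hA0 : A 0 = S := by rw [hA]; simp
  have h1 : mprod P A n = QA P S ^ n := by
    rw [← mprod_const P S n]
    exact mprod_congr P n (fun i hi => by
      show (if i = n + 1 then {b} else S) = S
      rw [if_neg (by omega)])
  have h2 : A (n + 1) = {b} := by show (if n + 1 = n + 1 then {b} else S) = {b}; rw [if_pos rfl]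
  have hm : mprod P A (n + 1) = QA P S ^ n * QA P {b} := by
    show mprod P A n * QA P (A (n + 1)) = _
    rw [h1, h2]
  rw [hA0, hm]
  congr 1
  simp only [Matrix.mul_apply]
  rw [Finset.sum_comm]
  refine Finset.sum_congr rfl fun w _ => ?_
  rw [← Finset.mul_sum]
  congr 1
  simp [QA, Finset.mem_singleton, Finset.sum_ite_eq']


lemma meas_time_zero (P : V → V → ℝ) (μ : V → Measure (ℕ → V)) (hP0 : ∀ a b : V, 0 ≤ P a b)
    (hlaw : ∀ (a : V) (n : ℕ) (y : ℕ → V),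
      μ a {ω | ∀ i ≤ n, ω i = y i} =
        ENNReal.ofReal ((if a = y 0 then (1 : ℝ) else 0) *
          ∏ i ∈ Finset.Icc 1 n, P (y (i - 1)) (y i)))
    (a b : V) :
    μ a {ω | ω 0 = b} = if a = b then 1 else 0 := by
  have hev : {ω : ℕ → V | ω 0 = b} = {ω : ℕ → V | ∀ k ≤ 0, ω k ∈ ({b} : Finset V)} := by
    ext ω; simp [Nat.le_zero]
  rw [hev, meas_stay P μ hP0 hlaw a 0 (fun _ => ({b} : Finset V))]
  simp [mprod, Matrix.one_apply, Finset.sum_ite_eq]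

lemma entryTime_le {A : Finset V} {ω : ℕ → V} {n : ℕ} (h : ω n ∈ A) :
    entryTime A ω ≤ n := sInf_le ⟨n, rfl, h⟩

lemma lt_entryTime {A : Finset V} {ω : ℕ → V} {n : ℕ} (h : ∀ k ≤ n, ω k ∉ A) :
    (n : ℕ∞) < entryTime A ω := by
  have h1 : (n : ℕ∞) < ((n + 1 : ℕ) : ℕ∞) := by exact_mod_cast Nat.lt_succ_self n
  refine lt_of_lt_of_le h1 (le_sInf ?_)
  · rintro m ⟨k, rfl, hk⟩
    have hnk : n + 1 ≤ k := by
      by_contra hc; push_neg at hc; exact h k (by omega) hk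
    exact_mod_cast hnk

lemma entryTime_eq_of_lt_top {A : Finset V} {ω : ℕ → V} (h : entryTime A ω < ⊤) :
    ∃ n : ℕ, entryTime A ω = n ∧ ω n ∈ A ∧ ∀ k < n, ω k ∉ A := by
  have hne : {n : ℕ | ω n ∈ A}.Nonempty := by
    by_contra hc
    rw [Set.not_nonempty_iff_eq_empty] at hc
    have hempty : {m : ℕ∞ | ∃ n : ℕ, m = (n : ℕ∞) ∧ ω n ∈ A} = ∅ := by
      ext m
      simp only [Set.mem_setOf_eq, Set.mem_empty_iff_false, iff_false, not_exists]
      rintro k ⟨rfl, hk⟩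
      exact absurd (Set.eq_empty_iff_forall_notMem.1 hc k hk) not_false
    rw [entryTime, hempty, sInf_empty] at h
    exact absurd h (lt_irrefl ⊤)
  refine ⟨sInf {n : ℕ | ω n ∈ A}, le_antisymm (sInf_le ⟨_, rfl, Nat.sInf_mem hne⟩)
    (le_sInf ?_), Nat.sInf_mem hne, fun k hk => Nat.notMem_of_lt_sInf hk⟩
  rintro m ⟨k, rfl, hk⟩
  exact_mod_cast Nat.sInf_le hk

lemma hitting_eq_iUnion (B : Finset V) (b : V) (hbB : b ∈ B) :
    {ω : ℕ → V | entryTime {b} ω < entryTime Bᶜ ω} =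
      ⋃ n : ℕ, {ω : ℕ → V | ω n = b ∧ ∀ k < n, ω k ∈ B.erase b} := by
  ext ω
  simp only [Set.mem_iUnion, Set.mem_setOf_eq]
  constructor
  · intro h
    have hlt : entryTime {b} ω < ⊤ := lt_of_lt_of_le h le_top
    obtain ⟨n, hn, hmem, hmin⟩ := entryTime_eq_of_lt_top hlt
    rw [Finset.mem_singleton] at hmem
    refine ⟨n, hmem, fun k hk => ?_⟩
    rw [Finset.mem_erase]
    refine ⟨fun hky => hmin k hk (Finset.mem_singleton.2 hky), ?_⟩
    by_contra hkB
    have h1 : entryTime Bᶜ ω ≤ k := entryTime_le (Finset.mem_compl.2 hkB)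
    have h2 : (k : ℕ∞) < entryTime {b} ω := by rw [hn]; exact_mod_cast hk
    exact absurd (lt_of_le_of_lt h1 (lt_trans h2 h)) (lt_irrefl _)
  · rintro ⟨n, h1, h2⟩
    have hle : entryTime {b} ω ≤ n := entryTime_le (Finset.mem_singleton.2 h1)
    have hgt : (n : ℕ∞) < entryTime Bᶜ ω := by
      refine lt_entryTime fun k hk hkc => ?_
      rw [Finset.mem_compl] at hkc
      rcases Nat.lt_or_ge k n with hkn | hkn
      · exact hkc (Finset.mem_erase.1 (h2 k hkn)).2
      · have : k = n := by omega
        subst this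
        exact hkc (h1 ▸ hbB)
    exact lt_of_le_of_lt hle hgt

lemma meas_hitting (P : V → V → ℝ) (μ : V → Measure (ℕ → V)) (hP0 : ∀ a b : V, 0 ≤ P a b)
    (hlaw : ∀ (a : V) (n : ℕ) (y : ℕ → V),
      μ a {ω | ∀ i ≤ n, ω i = y i} =
        ENNReal.ofReal ((if a = y 0 then (1 : ℝ) else 0) *
          ∏ i ∈ Finset.Icc 1 n, P (y (i - 1)) (y i)))
    (B : Finset V) (b x0 : V) (hb : b ∈ B) (hx0 : x0 ∈ B.erase b) :
    μ x0 {ω | entryTime {b} ω < entryTime Bᶜ ω} =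
      ∑' n : ℕ, ∑ w : V, ((QA P (B.erase b)) ^ n) x0 w * ENNReal.ofReal (P w b) := by
  rw [hitting_eq_iUnion B b hb]
  set D : ℕ → Set (ℕ → V) := fun n => {ω | ω n = b ∧ ∀ k < n, ω k ∈ B.erase b} with hD
  have hmeas : ∀ n, MeasurableSet (D n) := by
    intro n
    have : D n = (fun ω : ℕ → V => ω n) ⁻¹' {b} ∩
        ⋂ k, ⋂ (_ : k < n), (fun ω : ℕ → V => ω k) ⁻¹' ↑(B.erase b) := by
      ext ω; simp [hD, Set.mem_iInter, and_comm]
    rw [this]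
    exact ((measurable_pi_apply n) (measurableSet_singleton _)).inter
      (MeasurableSet.iInter fun k => MeasurableSet.iInter fun _ =>
        (measurable_pi_apply k) ((B.erase b).finite_toSet.measurableSet))
  have haux : ∀ m n : ℕ, m < n → Disjoint (D m) (D n) := by
    intro m n hmn
    refine Set.disjoint_left.2 fun ω h1 h2 => ?_
    exact (Finset.mem_erase.1 (h2.2 m hmn)).1 h1.1
  have hdisj : Pairwise (Function.onFun Disjoint D) := by
    intro m n hmn
    rcases lt_or_gt_of_ne hmn with h | h
    · exact haux m n h
    · exact (haux n m h).symm
  rw [measure_iUnion hdisj hmeas]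
  rw [tsum_eq_zero_add' ENNReal.summable]
  have hD0 : μ x0 (D 0) = 0 := by
    have : D 0 = {ω : ℕ → V | ω 0 = b} := by ext ω; simp [hD]
    rw [this, meas_time_zero P μ hP0 hlaw x0 b,
      if_neg (Finset.mem_erase.1 hx0).1]
  rw [hD0, zero_add]
  refine tsum_congr fun n => ?_
  have hev : D (n + 1) = {ω : ℕ → V | ω (n + 1) = b ∧ ∀ k ≤ n, ω k ∈ B.erase b} := by
    ext ω; simp only [hD, Set.mem_setOf_eq, Nat.lt_succ_iff]
  rw [hev, meas_visit P μ hP0 hlaw x0 b n (B.erase b), if_pos hx0]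

lemma green_eq_tsum_pow (P : V → V → ℝ) (μ : V → Measure (ℕ → V))
    (hP0 : ∀ a b : V, 0 ≤ P a b)
    (hlaw : ∀ (a : V) (n : ℕ) (y : ℕ → V),
      μ a {ω | ∀ i ≤ n, ω i = y i} =
        ENNReal.ofReal ((if a = y 0 then (1 : ℝ) else 0) *
          ∏ i ∈ Finset.Icc 1 n, P (y (i - 1)) (y i)))
    (hprob : ∀ a : V, IsProbabilityMeasure (μ a))
    (S : Finset V) (x0 : V) (hx0 : x0 ∈ S) :
    green μ S x0 x0 = (∑' n : ℕ, ((QA P S) ^ n) x0 x0).toReal := by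
  have hterm : ∀ n : ℕ, μ x0 {ω | ω n = x0 ∧ ∀ k ≤ n, ω k ∈ S} = ((QA P S) ^ n) x0 x0 := by
    intro n
    match n with
    | 0 =>
      have hev : {ω : ℕ → V | ω 0 = x0 ∧ ∀ k ≤ 0, ω k ∈ S} = {ω : ℕ → V | ω 0 = x0} := by
        ext ω
        simp only [Set.mem_setOf_eq, Nat.le_zero, forall_eq, and_iff_left_iff_imp]
        intro h; rw [h]; exact hx0
      rw [hev, meas_time_zero P μ hP0 hlaw x0 x0, if_pos rfl, pow_zero, Matrix.one_apply_eq]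
    | n + 1 =>
      have hev : {ω : ℕ → V | ω (n + 1) = x0 ∧ ∀ k ≤ n + 1, ω k ∈ S} =
          {ω : ℕ → V | ω (n + 1) = x0 ∧ ∀ k ≤ n, ω k ∈ S} := by
        ext ω
        simp only [Set.mem_setOf_eq, and_congr_right_iff]
        intro h
        constructor
        · intro h2 k hk; exact h2 k (by omega)
        · intro h2 k hk
          rcases Nat.lt_or_ge k (n + 1) with hk2 | hk2
          · exact h2 k (by omega)
          · have : k = n + 1 := by omega
            subst this; rw [h]; exact hx0
      rw [hev, meas_visit P μ hP0 hlaw x0 x0 n S, if_pos hx0, pow_succ, Matrix.mul_apply]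
      refine Finset.sum_congr rfl fun w _ => ?_
      congr 1
      unfold QA
      rw [if_pos hx0]
  unfold green
  have hfin : ∀ n : ℕ, μ x0 {ω | ω n = x0 ∧ ∀ k ≤ n, ω k ∈ S} ≠ ⊤ := fun n => by
    haveI := hprob x0
    exact measure_ne_top _ _
  rw [← ENNReal.tsum_toReal_eq hfin]
  congr 1
  exact tsum_congr hterm

lemma pow_split (Q R C : Matrix V V ENNReal) (h : Q = R + C) (n : ℕ) :
    Q ^ n = R ^ n + ∑ k ∈ Finset.range n, R ^ k * C * Q ^ (n - 1 - k) := by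
  induction n with
  | zero => simp
  | succ n ih =>
    have hQ : Q ^ (n + 1) = R * Q ^ n + C * Q ^ n := by
      rw [pow_succ']
      nth_rewrite 1 [h]
      rw [add_mul]
    rw [hQ]
    nth_rewrite 1 [ih]
    rw [mul_add, Finset.mul_sum, Finset.sum_range_succ']
    have e1 : ∀ k ∈ Finset.range n, R * (R ^ k * C * Q ^ (n - 1 - k)) =
        R ^ (k + 1) * C * Q ^ (n + 1 - 1 - (k + 1)) := by
      intro k _
      have hk : n + 1 - 1 - (k + 1) = n - 1 - k := by omega
      rw [hk]
      simp only [pow_succ', mul_assoc]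
    rw [Finset.sum_congr rfl e1]
    have e3 : R ^ 0 * C * Q ^ (n + 1 - 1 - 0) = C * Q ^ n := by
      rw [pow_zero, one_mul]
      norm_num
    rw [e3, pow_succ', add_assoc]

/-- The matrix keeping only the column `b` of `Q`. -/
noncomputable def colMat (Q : Matrix V V ENNReal) (b : V) : Matrix V V ENNReal :=
  Matrix.of fun w c => if c = b then Q w c else 0

lemma triple_apply (M N Q : Matrix V V ENNReal) (b a z : V) :
    (M * colMat Q b * N) a z = (∑ w : V, M a w * Q w b) * N b z := by
  rw [Matrix.mul_apply, Finset.sum_congr rfl (fun c _ => by rw [Matrix.mul_apply])]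
  have hterm : ∀ c : V,
      (∑ w : V, M a w * colMat Q b w c) * N c z =
      if c = b then (∑ w : V, M a w * Q w b) * N b z else 0 := by
    intro c
    by_cases hc : c = b
    · subst hc; simp [colMat]
    · simp [colMat, hc]
  rw [Finset.sum_congr rfl (fun c _ => hterm c), Finset.sum_ite_eq' Finset.univ b]
  simp

lemma cauchy_ennreal (u h : ℕ → ENNReal) :
    ∑' n : ℕ, ∑ k ∈ Finset.range n, u k * h (n - 1 - k) = (∑' n, u n) * (∑' n, h n) := by
  rw [tsum_eq_zero_add' ENNReal.summable]
  simp only [Finset.range_zero, Finset.sum_empty, zero_add]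
  have e1 : ∀ n : ℕ, ∑ k ∈ Finset.range (n + 1), u k * h (n + 1 - 1 - k) =
      ∑ kl ∈ Finset.HasAntidiagonal.antidiagonal n, u kl.1 * h kl.2 := by
    intro n
    rw [Finset.Nat.sum_antidiagonal_eq_sum_range_succ_mk]
    refine Finset.sum_congr rfl fun k hk => ?_
    have hnk : n + 1 - 1 - k = n - k := by omega
    rw [hnk]
  rw [tsum_congr e1]
  have e2 : ∀ n : ℕ, ∑ kl ∈ Finset.HasAntidiagonal.antidiagonal n, u kl.1 * h kl.2 =
      ∑' kl : (Finset.HasAntidiagonal.antidiagonal n : Finset (ℕ × ℕ)), u (kl : ℕ × ℕ).1 * h (kl : ℕ × ℕ).2 :=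
    fun n => (Finset.tsum_subtype _ _).symm
  rw [tsum_congr e2]
  calc ∑' (n : ℕ), ∑' kl : (Finset.HasAntidiagonal.antidiagonal n : Finset (ℕ × ℕ)),
          u (kl : ℕ × ℕ).1 * h (kl : ℕ × ℕ).2
      = ∑' σ : Σ n : ℕ, (Finset.HasAntidiagonal.antidiagonal n : Finset (ℕ × ℕ)),
          u (σ.2 : ℕ × ℕ).1 * h (σ.2 : ℕ × ℕ).2 :=
        (ENNReal.tsum_sigma' (fun σ : Σ n : ℕ, (Finset.HasAntidiagonal.antidiagonal n : Finset (ℕ × ℕ)) =>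
          u (σ.2 : ℕ × ℕ).1 * h (σ.2 : ℕ × ℕ).2)).symm
    _ = ∑' kl : ℕ × ℕ, u kl.1 * h kl.2 :=
        Equiv.tsum_eq Finset.HasAntidiagonal.sigmaAntidiagonalEquivProd (fun kl : ℕ × ℕ => u kl.1 * h kl.2)
    _ = (∑' n, u n) * (∑' n, h n) := by
        rw [ENNReal.tsum_prod (f := fun a b => u a * h b)]
        rw [tsum_congr fun a => (ENNReal.tsum_mul_left : ∑' b, u a * h b = u a * ∑' n, h n)]
        exact ENNReal.tsum_mul_right

lemma pow_apply_zero_of_not_mem (Q : Matrix V V ENNReal) (B : Finset V)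
    (hcol : ∀ v w, w ∉ B → Q v w = 0) (m : ℕ) (z w : V) (hw : w ∉ B) :
    (Q ^ (m + 1)) z w = 0 := by
  rw [pow_succ, Matrix.mul_apply]
  exact Finset.sum_eq_zero fun v _ => by rw [hcol v w hw, mul_zero]

lemma rowsum_succ_le (Q : Matrix V V ENNReal) (hrow : ∀ w, ∑ b, Q w b ≤ 1) (n : ℕ) (z : V) :
    ∑ b, (Q ^ (n + 1)) z b ≤ ∑ b, (Q ^ n) z b := by
  calc ∑ b, (Q ^ (n + 1)) z b = ∑ b, ∑ w, (Q ^ n) z w * Q w b := by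
        refine Finset.sum_congr rfl fun b _ => ?_
        rw [pow_succ, Matrix.mul_apply]
    _ = ∑ w, (Q ^ n) z w * ∑ b, Q w b := by
        rw [Finset.sum_comm]
        exact Finset.sum_congr rfl fun w _ => (Finset.mul_sum _ _ _).symm
    _ ≤ ∑ w, (Q ^ n) z w * 1 := Finset.sum_le_sum fun w _ => mul_le_mul_right (hrow w) _
    _ = ∑ w, (Q ^ n) z w := by simp

lemma rowsum_antitone (Q : Matrix V V ENNReal) (hrow : ∀ w, ∑ b, Q w b ≤ 1) (z : V) :
    Antitone (fun n => ∑ b, (Q ^ n) z b) :=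
  antitone_nat_of_succ_le fun n => rowsum_succ_le Q hrow n z

lemma tsum_pow_lt_top (Q : Matrix V V ENNReal) (B : Finset V)
    (hrow : ∀ w, ∑ b, Q w b ≤ 1)
    (hcol : ∀ v w, w ∉ B → Q v w = 0)
    (hN : ∃ N, 1 ≤ N ∧ ∀ z ∈ B, ∑ b, (Q ^ N) z b < 1)
    (x : V) (hx : x ∈ B) : ∑' n, (Q ^ n) x x < ⊤ := by
  obtain ⟨N, hN1, hNlt⟩ := hN
  set ρ : ENNReal := B.sup (fun z => ∑ b, (Q ^ N) z b) with hρdef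
  have hρ1 : ρ < 1 := by
    rw [hρdef, Finset.sup_lt_iff (by simp : (⊥ : ENNReal) < 1)]
    exact hNlt
  have hgeo : ∀ k, ∀ z ∈ B, ∑ b, (Q ^ (k * N)) z b ≤ ρ ^ k := by
    intro k
    induction k with
    | zero => intro z _; simp [Matrix.one_apply]
    | succ k ih =>
      intro z hz
      have hsplit : (k + 1) * N = N + k * N := by ring
      calc ∑ b, (Q ^ ((k + 1) * N)) z b
          = ∑ b, ∑ w, (Q ^ N) z w * (Q ^ (k * N)) w b := by
            refine Finset.sum_congr rfl fun b _ => ?_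
            rw [hsplit, pow_add, Matrix.mul_apply]
        _ = ∑ w, (Q ^ N) z w * ∑ b, (Q ^ (k * N)) w b := by
            rw [Finset.sum_comm]
            exact Finset.sum_congr rfl fun w _ => (Finset.mul_sum _ _ _).symm
        _ ≤ ∑ w, (Q ^ N) z w * ρ ^ k := by
            refine Finset.sum_le_sum fun w _ => ?_
            by_cases hw : w ∈ B
            · exact mul_le_mul_right (ih w hw) _
            · have : (Q ^ N) z w = 0 := by
                obtain ⟨m, rfl⟩ : ∃ m, N = m + 1 := ⟨N - 1, by omega⟩
                exact pow_apply_zero_of_not_mem Q B hcol m z w hw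
              rw [this, zero_mul, zero_mul]
        _ = (∑ w, (Q ^ N) z w) * ρ ^ k := by rw [Finset.sum_mul]
        _ ≤ ρ * ρ ^ k :=
            mul_le_mul_left (Finset.le_sup (f := fun z => ∑ b, (Q ^ N) z b) hz) _
        _ = ρ ^ (k + 1) := by rw [pow_succ, mul_comm]
  haveI : NeZero N := ⟨by omega⟩
  have hbound : ∀ n, (Q ^ n) x x ≤ ∑ b, (Q ^ n) x b := fun n =>
    Finset.single_le_sum (fun b _ => zero_le) (Finset.mem_univ x)
  have hmain : ∑' n, (Q ^ n) x x ≤ (N : ENNReal) * (1 - ρ)⁻¹ := by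
    calc ∑' n, (Q ^ n) x x ≤ ∑' n, ∑ b, (Q ^ n) x b := ENNReal.tsum_le_tsum hbound
      _ = ∑' p : ℕ × Fin N, ∑ b, (Q ^ ((Nat.divModEquiv N).symm p)) x b :=
          ((Nat.divModEquiv N).symm.tsum_eq (fun n => ∑ b, (Q ^ n) x b)).symm
      _ ≤ ∑' p : ℕ × Fin N, ρ ^ p.1 := by
          refine ENNReal.tsum_le_tsum fun p => ?_
          have h1 : (Nat.divModEquiv N).symm p = p.1 * N + (p.2 : ℕ) := rfl
          have h2 : ∑ b, (Q ^ ((Nat.divModEquiv N).symm p)) x b ≤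
              ∑ b, (Q ^ (p.1 * N)) x b := by
            rw [h1]
            exact rowsum_antitone Q hrow x (by omega)
          exact le_trans h2 (hgeo p.1 x hx)
      _ = (N : ENNReal) * (1 - ρ)⁻¹ := by
          rw [ENNReal.tsum_prod (f := fun a (_ : Fin N) => ρ ^ a)]
          have hin : ∀ a : ℕ, (∑' _ : Fin N, ρ ^ a) = (N : ENNReal) * ρ ^ a := by
            intro a
            rw [tsum_fintype]
            simp [Finset.card_univ, nsmul_eq_mul]
          rw [tsum_congr hin, ENNReal.tsum_mul_left, ENNReal.tsum_geometric]
  have h1 : (1 - ρ) ≠ 0 := by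
    rw [ne_eq, tsub_eq_zero_iff_le]
    exact not_le.mpr hρ1
  exact lt_of_le_of_lt hmain
    (ENNReal.mul_lt_top (ENNReal.natCast_lt_top N) (ENNReal.inv_lt_top.2 (pos_iff_ne_zero.2 h1)))

lemma QA_row_le_one (P : V → V → ℝ) (hP0 : ∀ a b : V, 0 ≤ P a b)
    (hP1 : ∀ a : V, ∑ b : V, P a b = 1) (S : Finset V) (w : V) :
    ∑ b, QA P S w b ≤ 1 := by
  have h1 : ∑ b, QA P S w b = ∑ b ∈ S, ENNReal.ofReal (P w b) := by
    unfold QA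
    rw [Finset.sum_ite_mem]
    simp
  rw [h1]
  calc ∑ b ∈ S, ENNReal.ofReal (P w b)
      ≤ ∑ b ∈ Finset.univ, ENNReal.ofReal (P w b) :=
        Finset.sum_le_sum_of_subset (Finset.subset_univ S)
    _ = ENNReal.ofReal (∑ b, P w b) := (ENNReal.ofReal_sum_of_nonneg fun b _ => hP0 w b).symm
    _ = 1 := by rw [hP1 w, ENNReal.ofReal_one]

lemma exists_contraction (P : V → V → ℝ) (μ : V → Measure (ℕ → V))
    (hP0 : ∀ a b : V, 0 ≤ P a b) (hP1 : ∀ a : V, ∑ b : V, P a b = 1)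
    (hprob : ∀ a : V, IsProbabilityMeasure (μ a))
    (hlaw : ∀ (a : V) (n : ℕ) (y : ℕ → V),
      μ a {ω | ∀ i ≤ n, ω i = y i} =
        ENNReal.ofReal ((if a = y 0 then (1 : ℝ) else 0) *
          ∏ i ∈ Finset.Icc 1 n, P (y (i - 1)) (y i)))
    (B : Finset V)
    (hexit : ∀ z ∈ B, μ z {ω | ∃ n : ℕ, ω n ∉ B} = 1) :
    ∃ N, 1 ≤ N ∧ ∀ z ∈ B, ∑ b, ((QA P B) ^ N) z b < 1 := by
  have key : ∀ z ∈ B, ∃ N, ∑ b, ((QA P B) ^ N) z b < 1 := by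
    intro z hz
    haveI := hprob z
    have hQn : ∀ n, μ z {ω | ∀ k ≤ n, ω k ∈ B} = ∑ b, ((QA P B) ^ n) z b := by
      intro n
      rw [meas_stay P μ hP0 hlaw z n (fun _ => B), if_pos hz, mprod_const]
    set C : ℕ → Set (ℕ → V) := fun n => {ω | ∀ k ≤ n, ω k ∈ B} with hC
    have hmeas : ∀ n, MeasurableSet (C n) := by
      intro n
      have : C n = ⋂ k, ⋂ (_ : k ≤ n), (fun ω : ℕ → V => ω k) ⁻¹' ↑B := by
        ext ω; simp [hC, Set.mem_iInter]
      rw [this]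
      exact MeasurableSet.iInter fun k => MeasurableSet.iInter fun _ =>
        (measurable_pi_apply k) B.finite_toSet.measurableSet
    have hanti : Antitone C := by
      intro m n hmn ω hω k hk
      exact hω k (le_trans hk hmn)
    have hinter : ⋂ n, C n = {ω : ℕ → V | ∀ k : ℕ, ω k ∈ B} := by
      ext ω
      simp only [Set.mem_iInter, hC, Set.mem_setOf_eq]
      exact ⟨fun h k => h k k le_rfl, fun h n k _ => h k⟩
    have hzero : μ z {ω : ℕ → V | ∀ k : ℕ, ω k ∈ B} = 0 := by
      have hms : MeasurableSet {ω : ℕ → V | ∃ n : ℕ, ω n ∉ B} := by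
        have : {ω : ℕ → V | ∃ n : ℕ, ω n ∉ B} =
            ⋃ n : ℕ, (fun ω : ℕ → V => ω n) ⁻¹' (↑B)ᶜ := by
          ext ω; simp
        rw [this]
        exact MeasurableSet.iUnion fun n =>
          (measurable_pi_apply n) B.finite_toSet.measurableSet.compl
      have hcompl : {ω : ℕ → V | ∀ k : ℕ, ω k ∈ B} = {ω : ℕ → V | ∃ n : ℕ, ω n ∉ B}ᶜ := by
        ext ω; simp
      rw [hcompl, measure_compl hms (measure_ne_top _ _), hexit z hz, measure_univ, tsub_self]
    have htend : Filter.Tendsto (fun n => μ z (C n)) Filter.atTop (nhds 0) := by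
      have h := MeasureTheory.tendsto_measure_iInter_atTop (μ := μ z)
        (fun n => (hmeas n).nullMeasurableSet) hanti ⟨0, measure_ne_top _ _⟩
      rw [hinter, hzero] at h
      exact h
    have hev : ∀ᶠ n in Filter.atTop, μ z (C n) < 1 :=
      htend.eventually_lt_const (by norm_num : (0 : ENNReal) < 1)
    obtain ⟨N, hN⟩ := hev.exists
    exact ⟨N, by rw [← hQn N]; exact hN⟩
  choose! F hF using key
  refine ⟨B.sup F + 1, by omega, fun z hz => ?_⟩
  have hle : F z ≤ B.sup F + 1 := le_trans (Finset.le_sup hz) (by omega)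
  exact lt_of_le_of_lt
    (rowsum_antitone (QA P B) (QA_row_le_one P hP0 hP1 B) z hle) (hF z hz)

end Aux

theorem green_erase_eq_escape_probability
    {V : Type*} [Fintype V] [DecidableEq V] [Nonempty V]
    [MeasurableSpace V] [MeasurableSingletonClass V]
    (P : V → V → ℝ) (μ : V → Measure (ℕ → V))
    (hP0 : ∀ a b : V, 0 ≤ P a b) (hP1 : ∀ a : V, ∑ b : V, P a b = 1)
    (hprob : ∀ a : V, IsProbabilityMeasure (μ a))
    (hlaw : ∀ (a : V) (n : ℕ) (y : ℕ → V),
      μ a {ω | ∀ i ≤ n, ω i = y i} =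
        ENNReal.ofReal ((if a = y 0 then (1 : ℝ) else 0) *
          ∏ i ∈ Finset.Icc 1 n, P (y (i - 1)) (y i)))
    (B : Finset V) (hB : B ≠ Finset.univ)
    (hexit : ∀ z ∈ B, μ z {ω | ∃ n : ℕ, ω n ∉ B} = 1)
    (x y : V) (hx : x ∈ B) (hy : y ∈ B) (hxy : x ≠ y) :
    green μ (B.erase y) x x =
      (1 - (μ x {ω | entryTime {y} ω < entryTime Bᶜ ω}).toReal *
          (μ y {ω | entryTime {x} ω < entryTime Bᶜ ω}).toReal) *
        green μ B x x := by
  classical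
  set Q : Matrix V V ENNReal := QA P B with hQ
  set Q2 : Matrix V V ENNReal := QA P (B.erase y) with hQ2
  set Q3 : Matrix V V ENNReal := QA P (B.erase x) with hQ3
  have hxB' : x ∈ B.erase y := Finset.mem_erase.2 ⟨hxy, hx⟩
  have hyB' : y ∈ B.erase x := Finset.mem_erase.2 ⟨fun h => hxy h.symm, hy⟩
  set U : ℕ → ENNReal := fun n => ∑ w, (Q2 ^ n) x w * ENNReal.ofReal (P w y) with hU
  set W : ℕ → ENNReal := fun n => ∑ w, (Q3 ^ n) y w * ENNReal.ofReal (P w x) with hW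
  have hp : μ x {ω | entryTime {y} ω < entryTime Bᶜ ω} = ∑' n, U n :=
    meas_hitting P μ hP0 hlaw B y x hy hxB'
  have hq : μ y {ω | entryTime {x} ω < entryTime Bᶜ ω} = ∑' n, W n :=
    meas_hitting P μ hP0 hlaw B x y hx hyB'
  have hgreenB : green μ B x x = (∑' n : ℕ, (Q ^ n) x x).toReal :=
    green_eq_tsum_pow P μ hP0 hlaw hprob B x hx
  have hgreenB2 : green μ (B.erase y) x x = (∑' n : ℕ, (Q2 ^ n) x x).toReal :=
    green_eq_tsum_pow P μ hP0 hlaw hprob (B.erase y) x hxB'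
  -- matrix decompositions
  have hdecomp2 : Q = Q2 + colMat Q y := by
    ext w b
    show QA P B w b = QA P (B.erase y) w b + (if b = y then QA P B w b else 0)
    by_cases hb : b = y
    · subst hb
      simp [QA, Finset.mem_erase, hy]
    · by_cases hbB : b ∈ B <;> simp [QA, Finset.mem_erase, hb, hbB]
  have hdecomp3 : Q = Q3 + colMat Q x := by
    ext w b
    show QA P B w b = QA P (B.erase x) w b + (if b = x then QA P B w b else 0)
    by_cases hb : b = x
    · subst hb
      simp [QA, Finset.mem_erase, hx]
    · by_cases hbB : b ∈ B <;> simp [QA, Finset.mem_erase, hb, hbB]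
  have hQcol : ∀ w : V, Q w y = ENNReal.ofReal (P w y) := fun w => by
    show QA P B w y = _; unfold QA; rw [if_pos hy]
  have hQcolx : ∀ w : V, Q w x = ENNReal.ofReal (P w x) := fun w => by
    show QA P B w x = _; unfold QA; rw [if_pos hx]
  have hkey : ∀ n, (Q ^ n) x x =
      (Q2 ^ n) x x + ∑ k ∈ Finset.range n, U k * (Q ^ (n - 1 - k)) y x := by
    intro n
    rw [pow_split Q Q2 (colMat Q y) hdecomp2 n]
    rw [Matrix.add_apply, Matrix.sum_apply]
    congr 1
    refine Finset.sum_congr rfl fun k _ => ?_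
    rw [triple_apply (Q2 ^ k) (Q ^ (n - 1 - k)) Q y x x]
    congr 1
    rw [hU]
    exact Finset.sum_congr rfl fun w _ => by rw [hQcol w]
  have hkey2 : ∀ n, (Q ^ n) y x = ∑ k ∈ Finset.range n, W k * (Q ^ (n - 1 - k)) x x := by
    intro n
    rw [pow_split Q Q3 (colMat Q x) hdecomp3 n]
    rw [Matrix.add_apply, Matrix.sum_apply]
    have hz : (Q3 ^ n) y x = 0 := by
      match n with
      | 0 => rw [pow_zero]; exact Matrix.one_apply_ne (fun h => hxy h.symm)
      | m + 1 =>
        refine pow_apply_zero_of_not_mem Q3 (B.erase x) (fun v w hw => ?_) m y x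
          (by simp)
        show QA P (B.erase x) v w = 0
        unfold QA; rw [if_neg hw]
    rw [hz, zero_add]
    refine Finset.sum_congr rfl fun k _ => ?_
    rw [triple_apply (Q3 ^ k) (Q ^ (n - 1 - k)) Q x y x]
    congr 1
    rw [hW]
    exact Finset.sum_congr rfl fun w _ => by rw [hQcolx w]
  -- tsum identities
  set G : ENNReal := ∑' n : ℕ, (Q ^ n) x x with hG
  set G2 : ENNReal := ∑' n : ℕ, (Q2 ^ n) x x with hG2
  set H : ENNReal := ∑' n : ℕ, (Q ^ n) y x with hH
  set p : ENNReal := ∑' n, U n with hpdef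
  set q : ENNReal := ∑' n, W n with hqdef
  have hGeq : G = G2 + p * H := by
    rw [hG, tsum_congr hkey, ENNReal.tsum_add, cauchy_ennreal U (fun m => (Q ^ m) y x)]
  have hHeq : H = q * G := by
    rw [hH, tsum_congr hkey2, cauchy_ennreal W (fun m => (Q ^ m) x x)]
  -- finiteness
  have hrow : ∀ w, ∑ b, Q w b ≤ 1 := QA_row_le_one P hP0 hP1 B
  have hcolB : ∀ v w, w ∉ B → Q v w = 0 := fun v w hw => by
    show QA P B v w = 0; unfold QA; rw [if_neg hw]
  have hGfin : G < ⊤ :=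
    tsum_pow_lt_top Q B hrow hcolB (exists_contraction P μ hP0 hP1 hprob hlaw B hexit) x hx
  have hple : p ≤ 1 := by
    rw [← hp]
    haveI := hprob x
    exact prob_le_one
  have hqle : q ≤ 1 := by
    rw [← hq]
    haveI := hprob y
    exact prob_le_one
  have hG2le : G2 ≤ G := by
    conv_rhs => rw [hGeq]
    exact self_le_add_right G2 (p * H)
  have hprodle : p * (q * G) ≤ G := by
    rw [← hHeq]
    conv_rhs => rw [hGeq]
    exact le_add_self
  have hGne : G ≠ ⊤ := hGfin.ne
  have hG2ne : G2 ≠ ⊤ := (lt_of_le_of_lt hG2le hGfin).ne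
  have hprodne : p * (q * G) ≠ ⊤ := (lt_of_le_of_lt hprodle hGfin).ne
  have hpne : p ≠ ⊤ := (lt_of_le_of_lt hple (by norm_num)).ne
  have hqne : q ≠ ⊤ := (lt_of_le_of_lt hqle (by norm_num)).ne
  -- final real computation
  rw [hgreenB, hgreenB2, hp, hq]
  have h1 : p * H ≠ ⊤ := by rw [hHeq]; exact hprodne
  have hGreal : G.toReal = G2.toReal + p.toReal * (q.toReal * G.toReal) := by
    conv_lhs => rw [hGeq]
    rw [ENNReal.toReal_add hG2ne h1, ENNReal.toReal_mul, hHeq, ENNReal.toReal_mul]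
  nlinarith [hGreal]

end LERW
end

section
/- Let V be a finite set, b ∈ V, and let w be a finite path on V. If b does not occur among the entries of the loop erasure 𝔏(w), then the partial loop erasure associated with V ∖ {b} coincides with the full loop erasure: 𝔏_{V∖{b}}(w) = 𝔏(w). -/
open MeasureTheory

namespace LERW

variable {V : Type*} [DecidableEq V]

variable [Fintype V]

variable [MeasurableSpace V]

theorem PLE_erase_eq_LE_of_not_mem_LE
    {V : Type*} [Fintype V] [DecidableEq V] (b : V) (w : List V)
    (hb : b ∉ LE w) :
    PLE (Finset.univ \ {b}) w = LE w := by
  suffices h : ∀ n (w : List V), w.length ≤ n → b ∉ LE w →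
      PLE (Finset.univ \ {b}) w = LE w from h w.length w le_rfl hb
  clear hb w
  intro n
  induction n with
  | zero =>
    intro w hw _
    have : w = [] := List.length_eq_zero_iff.mp (Nat.le_zero.mp hw)
    subst this
    simp [PLE, LE]
  | succ n ih =>
    intro w hw hb
    rcases w with _ | ⟨a, rest⟩
    · simp [PLE, LE]
    · have hLE : LE (a :: rest) =
          if a = (a :: rest).getLast (List.cons_ne_nil a rest) then [a]
          else a :: PLE Finset.univ (dropToLastOcc a rest) := by
        rw [LE, PLE]
        simp
      have hab : a ≠ b := by
        rintro rfl
        apply hb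
        rw [hLE]
        split <;> simp
      rw [PLE, hLE]
      have haS : a ∈ Finset.univ \ ({b} : Finset V) := by simp [hab]
      rw [if_pos haS]
      by_cases hlast : a = (a :: rest).getLast (List.cons_ne_nil a rest)
      · rw [if_pos hlast, if_pos hlast]
      · rw [if_neg hlast, if_neg hlast]
        have hb' : b ∉ LE (dropToLastOcc a rest) := by
          rw [hLE, if_neg hlast] at hb
          simp only [List.mem_cons, not_or] at hb
          exact hb.2
        have hlen : (dropToLastOcc a rest).length ≤ n := by
          have := dropToLastOcc_length_le a rest
          simp at hw
          omega
        rw [ih _ hlen hb', LE]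

end LERW
end
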